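/- Let V be a Polish space and C(Q) the set of probability charges on a countable generating algebra Q of subsets of V, viewed as a subset of [0,1]^Q with the product σ-algebra. Then the subset M(Q) ⊆ C(Q) of σ-additive probability charges is measurable with respect to the trace of the product σ-algebra on C(Q). -/

import Mathlib

open MeasureTheory

/-- A finitely additive probability charge on the algebra `Q`, viewed as a point of
`[0,1]^Q` (here a function `↥Q → ℝ`). -/
def IsChargeOn {V : Type*} (Q : Set (Set V)) (f : ↥Q → ℝ) : Prop :=
  (∀ e : ↥Q, (e : Set V) = ∅ → f e = 0) ∧
    (∀ e : ↥Q, (e : Set V) = Set.univ → f e = 1) ∧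
    (∀ e : ↥Q, 0 ≤ f e) ∧
    ∀ a b c : ↥Q, Disjoint (a : Set V) (b : Set V) → (c : Set V) = ↑a ∪ ↑b →
      f c = f a + f b

/-- σ-additivity of a charge on the algebra `Q`: countable additivity along every sequence
of pairwise disjoint sets of `Q` whose union again lies in `Q`. -/
def IsSigmaAddOn {V : Type*} (Q : Set (Set V)) (f : ↥Q → ℝ) : Prop :=
  ∀ (a : ℕ → ↥Q) (c : ↥Q),
    Pairwise (Function.onFun Disjoint (fun n => (a n : Set V))) →
    (c : Set V) = ⋃ n, (a n : Set V) →
    HasSum (fun n => f (a n)) (f c)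


section Stmt8AuxSection

open MeasureTheory Set Filter Topology ProbabilityTheory
open scoped ENNReal

namespace Stmt8Aux


variable {V : Type*} [MeasurableSpace V] {Q : Set (Set V)}

lemma measQ (hgen : MeasurableSpace.generateFrom Q = ‹MeasurableSpace V›)
    {A : Set V} (hA : A ∈ Q) : MeasurableSet A := by
  rw [← hgen]; exact MeasurableSpace.measurableSet_generateFrom hA

noncomputable def chargeOf (Q : Set (Set V)) (μ : Measure V) : ↥Q → ℝ :=
  fun A => (μ A).toReal

lemma chargeOf_isCharge (hgen : MeasurableSpace.generateFrom Q = ‹MeasurableSpace V›)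
    (μ : Measure V) [IsProbabilityMeasure μ] : IsChargeOn Q (chargeOf Q μ) := by
  refine ⟨fun e he => ?_, fun e he => ?_, fun e => ENNReal.toReal_nonneg,
    fun a b c hd hc => ?_⟩
  · simp [chargeOf, he]
  · simp [chargeOf, he]
  · have h : μ (c : Set V) = μ a + μ b := by
      rw [hc, measure_union hd (measQ hgen b.2)]
    simp [chargeOf, h, ENNReal.toReal_add (measure_ne_top _ _) (measure_ne_top _ _)]

lemma chargeOf_sigmaAdd (hgen : MeasurableSpace.generateFrom Q = ‹MeasurableSpace V›)
    (μ : Measure V) [IsProbabilityMeasure μ] : IsSigmaAddOn Q (chargeOf Q μ) := by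
  intro a c hd hc
  have h1 : μ (c : Set V) = ∑' n, μ (a n) := by
    rw [hc]; exact measure_iUnion hd fun n => measQ hgen (a n).2
  have hne : ∑' n, μ ((a n : Set V)) ≠ ⊤ := by rw [← h1]; exact measure_ne_top μ _
  have h2 := ENNReal.hasSum_toReal (f := fun n => μ ((a n : Set V))) hne
  have h3 : ∑' n, (μ ((a n : Set V))).toReal = (μ (c : Set V)).toReal := by
    rw [h1, ENNReal.tsum_toReal_eq fun n => measure_ne_top μ _]
  rw [h3] at h2
  simpa [chargeOf] using h2

theorem exists_measure (hQ : IsSetAlgebra Q)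
    (hgen : MeasurableSpace.generateFrom Q = ‹MeasurableSpace V›)
    {f : ↥Q → ℝ} (hf : IsChargeOn Q f) (hsig : IsSigmaAddOn Q f) :
    ∃ μ : Measure V, IsProbabilityMeasure μ ∧ ∀ A : ↥Q, μ A = ENNReal.ofReal (f A) := by
  obtain ⟨hf0, hf1, hfpos, hfadd⟩ := hf
  have hmono : ∀ (a b : ↥Q), (a : Set V) ⊆ b → f a ≤ f b := by
    intro a b hab
    have hmem : ((b : Set V) \ a) ∈ Q := hQ.diff_mem b.2 a.2
    have h := hfadd a ⟨_, hmem⟩ b disjoint_sdiff_right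
      (by simp [Set.union_diff_cancel hab])
    have h2 := hfpos ⟨_, hmem⟩
    linarith
  set P : Set V → Prop := fun s => s ∈ Q with hP
  set mQ : ∀ s : Set V, P s → ℝ≥0∞ := fun s hs => ENNReal.ofReal (f ⟨s, hs⟩) with hmQ
  have P0 : P ∅ := hQ.empty_mem
  have m0 : mQ ∅ P0 = 0 := by simp [hmQ, hf0 ⟨∅, P0⟩ rfl]
  set ν : OuterMeasure V := inducedOuterMeasure mQ P0 m0 with hν
  have key : ∀ (s : Set V) (hs : P s) (t : ℕ → Set V), s ⊆ iUnion t →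
      ENNReal.ofReal (f ⟨s, hs⟩) ≤ ∑' i, extend mQ (t i) := by
    intro s hs t hcov
    by_cases hQt : ∀ i, t i ∈ Q
    · have hpS : ∀ i, (partialSups t i : Set V) ∈ Q := by
        intro i
        induction i with
        | zero => simpa using hQt 0
        | succ n ih => rw [partialSups_add_one]; exact hQ.union_mem ih (hQt _)
      have hdisQ : ∀ i, disjointed t i ∈ Q := by
        intro i
        cases i with
        | zero => simpa [disjointed_zero] using hQt 0
        | succ n => rw [disjointed_add_one]; exact hQ.diff_mem (hQt _) (hpS n)
      set d : ℕ → Set V := fun i => s ∩ disjointed t i with hd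
      have hdQ : ∀ i, d i ∈ Q := fun i => hQ.inter_mem hs (hdisQ i)
      have hdisj : Pairwise (Function.onFun Disjoint
          fun i => ((⟨d i, hdQ i⟩ : ↥Q) : Set V)) := by
        intro i j hij
        exact (disjoint_disjointed t hij).mono inter_subset_right inter_subset_right
      have hu : (s : Set V) = ⋃ i, d i := by
        rw [hd]
        rw [← Set.inter_iUnion, iUnion_disjointed, Set.inter_eq_left.mpr hcov]
      have hsum := hsig (fun i => ⟨d i, hdQ i⟩) ⟨s, hs⟩ hdisj hu
      have hof : ENNReal.ofReal (f ⟨s, hs⟩) = ∑' i, ENNReal.ofReal (f ⟨d i, hdQ i⟩) := by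
        rw [← hsum.tsum_eq]
        exact ENNReal.ofReal_tsum_of_nonneg (fun i => hfpos _) hsum.summable
      rw [hof]
      refine ENNReal.tsum_le_tsum fun i => ?_
      rw [extend_eq mQ (hQt i)]
      exact ENNReal.ofReal_le_ofReal (hmono _ ⟨t i, hQt i⟩
        (inter_subset_right.trans (disjointed_subset t i)))
    · push_neg at hQt
      obtain ⟨i, hi⟩ := hQt
      have htop : extend mQ (t i) = ⊤ := extend_eq_top mQ hi
      exact le_top.trans (htop ▸ ENNReal.le_tsum i)
  have hν_eq : ∀ (s : Set V) (hs : P s), ν s = ENNReal.ofReal (f ⟨s, hs⟩) := by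
    intro s hs
    rw [hν, inducedOuterMeasure]
    refine le_antisymm (le_of_le_of_eq (OuterMeasure.ofFunction_le s) (extend_eq mQ hs)) ?_
    rw [OuterMeasure.ofFunction_apply]
    exact le_iInf₂ fun t ht => key s hs t ht
  have hub : ∀ (w : Set V) (t : ℕ → Set V), w ⊆ iUnion t →
      ν w ≤ ∑' i, extend mQ (t i) := by
    intro w t hcov
    rw [hν, inducedOuterMeasure, OuterMeasure.ofFunction_apply]
    exact iInf₂_le t hcov
  have hcar : ∀ s ∈ Q, MeasurableSet[ν.caratheodory] s := by
    intro s hs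
    rw [OuterMeasure.isCaratheodory_iff_le]
    intro u
    conv_rhs => rw [hν, inducedOuterMeasure, OuterMeasure.ofFunction_apply]
    refine le_iInf₂ fun t hcov => ?_
    have step : ∀ i, extend mQ (t i ∩ s) + extend mQ (t i \ s) ≤ extend mQ (t i) := by
      intro i
      by_cases hti : t i ∈ Q
      · have h1 : t i ∩ s ∈ Q := hQ.inter_mem hti hs
        have h2 : t i \ s ∈ Q := hQ.diff_mem hti hs
        rw [extend_eq mQ hti, extend_eq mQ h1, extend_eq mQ h2]
        have hadd := hfadd ⟨_, h1⟩ ⟨_, h2⟩ ⟨_, hti⟩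
          (disjoint_sdiff_right.mono_left inter_subset_right) (Set.inter_union_diff _ _).symm
        show ENNReal.ofReal (f ⟨t i ∩ s, h1⟩) + ENNReal.ofReal (f ⟨t i \ s, h2⟩)
          ≤ ENNReal.ofReal (f ⟨t i, hti⟩)
        rw [← ENNReal.ofReal_add (hfpos _) (hfpos _), hadd]
      · rw [extend_eq_top mQ hti]; exact le_top
    calc ν (u ∩ s) + ν (u \ s)
        ≤ (∑' i, extend mQ (t i ∩ s)) + ∑' i, extend mQ (t i \ s) := by
          refine add_le_add (hub _ _ ?_) (hub _ _ ?_)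
          · intro x hx
            obtain ⟨i, hi⟩ := mem_iUnion.1 (hcov hx.1)
            exact mem_iUnion.2 ⟨i, hi, hx.2⟩
          · intro x hx
            obtain ⟨i, hi⟩ := mem_iUnion.1 (hcov hx.1)
            exact mem_iUnion.2 ⟨i, hi, hx.2⟩
      _ = ∑' i, (extend mQ (t i ∩ s) + extend mQ (t i \ s)) := ENNReal.tsum_add.symm
      _ ≤ ∑' i, extend mQ (t i) := ENNReal.tsum_le_tsum step
  have hle : ‹MeasurableSpace V› ≤ ν.caratheodory := by
    rw [← hgen]
    exact MeasurableSpace.generateFrom_le hcar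
  refine ⟨ν.toMeasure hle, ⟨?_⟩, fun A => ?_⟩
  · rw [toMeasure_apply _ _ MeasurableSet.univ, hν_eq univ hQ.univ_mem,
      hf1 ⟨univ, hQ.univ_mem⟩ rfl, ENNReal.ofReal_one]
  · rw [toMeasure_apply _ _ (measQ hgen A.2), hν_eq A A.2]



noncomputable section

instance instNonemptyRatGt (x : ℝ) : Nonempty {q : ℚ // x < (q : ℝ)} := by
  obtain ⟨q, hq⟩ := exists_rat_gt x
  exact ⟨⟨q, hq⟩⟩

/-- countable conditions characterizing cdf-like functions on the rationals -/
def Pred (g : ℚ → ℝ) : Prop :=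
  Monotone g ∧ (∀ q, 0 ≤ g q) ∧ (∀ q, g q ≤ 1) ∧
  (∀ n : ℕ, ∃ q, g q < ((n : ℝ) + 1)⁻¹) ∧
  (∀ n : ℕ, ∃ q, 1 - ((n : ℝ) + 1)⁻¹ < g q) ∧
  (∀ (q : ℚ) (n : ℕ), ∃ p, q < p ∧ g p < g q + ((n : ℝ) + 1)⁻¹)

def g₀ : ℚ → ℝ := fun q => if q < 0 then 0 else 1

lemma pred_g₀ : Pred g₀ := by
  have hmono : Monotone g₀ := by
    intro p q hpq
    by_cases hp : p < 0
    · by_cases hq : q < 0 <;> simp [g₀, hp, hq]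
    · have hq : ¬ q < 0 := fun h => hp (lt_of_le_of_lt hpq h)
      simp [g₀, hp, hq]
  refine ⟨hmono, ?_, ?_, ?_, ?_, ?_⟩
  · intro q; by_cases h : q < 0 <;> simp [g₀, h]
  · intro q; by_cases h : q < 0 <;> simp [g₀, h]
  · intro n
    refine ⟨-1, ?_⟩
    norm_num [g₀]
    positivity
  · intro n
    refine ⟨0, ?_⟩
    have h : ¬ ((0:ℚ) < 0) := lt_irrefl 0
    simp only [g₀, if_neg h]
    have : (0:ℝ) < ((n:ℝ)+1)⁻¹ := by positivity
    linarith
  · intro q n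
    by_cases h : q < 0
    · obtain ⟨p, hp1, hp2⟩ := exists_rat_btwn (show (q:ℝ) < 0 by exact_mod_cast h)
      refine ⟨p, by exact_mod_cast hp1, ?_⟩
      have : p < 0 := by exact_mod_cast hp2
      simp only [g₀, if_pos this, if_pos h]
      positivity
    · refine ⟨q + 1, by linarith, ?_⟩
      have h1 : ¬ (q + 1 < 0) := by linarith [not_lt.mp h]
      simp only [g₀, if_neg h, if_neg h1]
      norm_num
      positivity

open Classical in
def gfix (g : ℚ → ℝ) : ℚ → ℝ := if Pred g then g else g₀

lemma pred_gfix (g : ℚ → ℝ) : Pred (gfix g) := by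
  rw [gfix]; split
  · assumption
  · exact pred_g₀

lemma gfix_eq {g : ℚ → ℝ} (hg : Pred g) : gfix g = g := if_pos hg

/-- right-continuous extension to ℝ by infimum over larger rationals -/
def ratInf (g : ℚ → ℝ) (x : ℝ) : ℝ := ⨅ p : {q : ℚ // x < (q : ℝ)}, g p

section predLemmas

variable {g : ℚ → ℝ} (hg : Pred g)

include hg

lemma ratInf_bdd (x : ℝ) : BddBelow (range fun p : {q : ℚ // x < (q : ℝ)} => g p) :=
  ⟨0, by rintro y ⟨p, rfl⟩; exact hg.2.1 p⟩

lemma ratInf_le {x : ℝ} {p : ℚ} (hp : x < (p : ℝ)) : ratInf g x ≤ g p :=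
  ciInf_le (ratInf_bdd hg x) ⟨p, hp⟩

lemma ratInf_nonneg (x : ℝ) : 0 ≤ ratInf g x :=
  le_ciInf fun p => hg.2.1 p

lemma ratInf_le_one (x : ℝ) : ratInf g x ≤ 1 :=
  (ratInf_le hg (Classical.arbitrary {q : ℚ // x < (q:ℝ)}).2).trans (hg.2.2.1 _)

lemma ratInf_mono : Monotone (ratInf g) := by
  intro x y hxy
  refine le_ciInf fun p => ratInf_le hg (lt_of_le_of_lt hxy p.2)

lemma le_ratInf {x : ℝ} {q : ℚ} (hq : (q : ℝ) ≤ x) : g q ≤ ratInf g x := by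
  refine le_ciInf fun p => hg.1 ?_
  have h : (q:ℝ) < (p.1:ℝ) := hq.trans_lt p.2
  exact_mod_cast h.le

lemma ratInf_rat (q : ℚ) : ratInf g (q : ℝ) = g q := by
  refine le_antisymm ?_ (le_ratInf hg le_rfl)
  refine le_of_forall_pos_le_add fun ε hε => ?_
  obtain ⟨n, hn⟩ := exists_nat_one_div_lt hε
  obtain ⟨p, hp1, hp2⟩ := hg.2.2.2.2.2 q n
  have h1 : ratInf g (q:ℝ) ≤ g p := ratInf_le hg (by exact_mod_cast hp1)
  have h2 : ((n : ℝ) + 1)⁻¹ < ε := by rwa [one_div] at hn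
  linarith

lemma ratInf_rightCts (x : ℝ) : ContinuousWithinAt (ratInf g) (Ici x) x := by
  rw [ContinuousWithinAt]
  refine tendsto_order.2 ⟨fun b hb => ?_, fun b hb => ?_⟩
  · filter_upwards [self_mem_nhdsWithin] with y hy
    exact hb.trans_le (ratInf_mono hg hy)
  · obtain ⟨⟨p, hp⟩, hgp⟩ := exists_lt_of_ciInf_lt hb
    filter_upwards [Ico_mem_nhdsGE hp] with y hy
    exact (ratInf_le hg hy.2).trans_lt hgp

lemma ratInf_tendsto_atBot : Tendsto (ratInf g) atBot (𝓝 0) := by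
  refine tendsto_order.2 ⟨fun b hb => ?_, fun b hb => ?_⟩
  · exact Eventually.of_forall fun y => hb.trans_le (ratInf_nonneg hg y)
  · obtain ⟨n, hn⟩ := exists_nat_one_div_lt hb
    obtain ⟨q, hq⟩ := hg.2.2.2.1 n
    rw [one_div] at hn
    filter_upwards [eventually_lt_atBot ((q : ℝ))] with y hy
    exact (ratInf_le hg hy).trans_lt (hq.trans hn)

lemma ratInf_tendsto_atTop : Tendsto (ratInf g) atTop (𝓝 1) := by
  refine tendsto_order.2 ⟨fun b hb => ?_, fun b hb => ?_⟩
  · have h1 : 0 < 1 - b := by linarith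
    obtain ⟨n, hn⟩ := exists_nat_one_div_lt h1
    obtain ⟨q, hq⟩ := hg.2.2.2.2.1 n
    rw [one_div] at hn
    filter_upwards [eventually_ge_atTop ((q : ℝ))] with y hy
    have := le_ratInf hg hy
    linarith
  · exact Eventually.of_forall fun y => (ratInf_le_one hg y).trans_lt hb

end predLemmas

/-- the Stieltjes function attached to `g : ℚ → ℝ` -/
def stil (g : ℚ → ℝ) : StieltjesFunction ℝ where
  toFun := ratInf (gfix g)
  mono' := ratInf_mono (pred_gfix g)
  right_continuous' := ratInf_rightCts (pred_gfix g)

/-- the probability measure on ℝ attached to `g : ℚ → ℝ` -/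
def mOf (g : ℚ → ℝ) : Measure ℝ := (stil g).measure

lemma stil_tendsto_atBot (g : ℚ → ℝ) : Tendsto (stil g) atBot (𝓝 0) :=
  ratInf_tendsto_atBot (pred_gfix g)

instance mOf_prob (g : ℚ → ℝ) : IsProbabilityMeasure (mOf g) :=
  ⟨by rw [mOf, (stil g).measure_univ (stil_tendsto_atBot g) (ratInf_tendsto_atTop (pred_gfix g))]
      norm_num⟩

lemma mOf_Iic (g : ℚ → ℝ) (x : ℝ) : mOf g (Iic x) = ENNReal.ofReal (ratInf (gfix g) x) := by
  rw [mOf, (stil g).measure_Iic (stil_tendsto_atBot g) x, sub_zero]; rfl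

lemma mOf_Iic_rat {g : ℚ → ℝ} (hg : Pred g) (q : ℚ) :
    mOf g (Iic (q : ℝ)) = ENNReal.ofReal (g q) := by
  rw [mOf_Iic, gfix_eq hg, ratInf_rat hg]

/-- the cdf of a probability measure on ℝ, restricted to ℚ, satisfies `Pred` -/
lemma pred_cdf (ν : Measure ℝ) [IsProbabilityMeasure ν] :
    Pred (fun q : ℚ => cdf ν (q : ℝ)) := by
  have hrc : ∀ (x : ℝ) (ε : ℝ), 0 < ε → ∃ p : ℚ, x < (p : ℝ) ∧ cdf ν (p : ℝ) < cdf ν x + ε := by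
    intro x ε hε
    have h := (cdf ν).right_continuous x
    rw [ContinuousWithinAt] at h
    have h2 : ∀ᶠ y in 𝓝[Ici x] x, cdf ν y < cdf ν x + ε :=
      (tendsto_order.1 h).2 _ (lt_add_of_pos_right _ hε)
    obtain ⟨u, hu, hsub⟩ := mem_nhdsGE_iff_exists_Ico_subset.1 h2
    obtain ⟨p, hp1, hp2⟩ := exists_rat_btwn (show x < u from hu)
    exact ⟨p, hp1, hsub ⟨hp1.le, hp2⟩⟩
  refine ⟨fun p q hpq => monotone_cdf (μ := ν) (by exact_mod_cast hpq),
    fun q => cdf_nonneg (μ := ν) (q:ℝ), fun q => cdf_le_one (μ := ν) (q:ℝ),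
    fun n => ?_, fun n => ?_, fun q n => ?_⟩
  · have h := (tendsto_order.1 (tendsto_cdf_atBot (μ := ν))).2 ((n:ℝ)+1)⁻¹ (by positivity)
    obtain ⟨x, hx⟩ := h.exists
    obtain ⟨q, hq⟩ := exists_rat_lt x
    exact ⟨q, lt_of_le_of_lt (monotone_cdf (μ := ν) hq.le) hx⟩
  · have h := (tendsto_order.1 (tendsto_cdf_atTop (μ := ν))).1 (1 - ((n:ℝ)+1)⁻¹)
      (sub_lt_self _ (by positivity))
    obtain ⟨x, hx⟩ := h.exists
    obtain ⟨q, hq⟩ := exists_rat_gt x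
    exact ⟨q, hx.trans_le (monotone_cdf (μ := ν) hq.le)⟩
  · obtain ⟨p, hp1, hp2⟩ := hrc (q : ℝ) ((n:ℝ)+1)⁻¹ (by positivity)
    exact ⟨p, by exact_mod_cast hp1, hp2⟩

/-- for `g` the rational restriction of the cdf of `ν`, `mOf g` recovers `ν`. -/
lemma mOf_cdf (ν : Measure ℝ) [IsProbabilityMeasure ν] :
    mOf (fun q : ℚ => cdf ν (q : ℝ)) = ν := by
  set g : ℚ → ℝ := fun q : ℚ => cdf ν (q : ℝ) with hgdef
  have hg : Pred g := pred_cdf ν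
  have hstil : stil g = cdf ν := by
    apply StieltjesFunction.ext
    intro x
    show ratInf (gfix g) x = cdf ν x
    rw [gfix_eq hg]
    refine le_antisymm ?_ (le_ciInf fun p => monotone_cdf (μ := ν) p.2.le)
    refine le_of_forall_pos_le_add fun ε hε => ?_
    have h := (cdf ν).right_continuous x
    rw [ContinuousWithinAt] at h
    have h2 : ∀ᶠ y in 𝓝[Ici x] x, cdf ν y < cdf ν x + ε :=
      (tendsto_order.1 h).2 _ (lt_add_of_pos_right _ hε)
    obtain ⟨u, hu, hsub⟩ := mem_nhdsGE_iff_exists_Ico_subset.1 h2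
    obtain ⟨p, hp1, hp2⟩ := exists_rat_btwn (show x < u from hu)
    exact (ratInf_le hg hp1).trans (hsub ⟨hp1.le, hp2⟩).le
  rw [mOf, hstil, measure_cdf]

end




/-- Key measurability: on a set of `Pred`-functions, `g ↦ mOf g B` is measurable. -/
lemma measurable_mOf {T : Set (ℚ → ℝ)} (hT : ∀ g ∈ T, Pred g) {B : Set ℝ}
    (hB : MeasurableSet B) : Measurable fun g : ↥T => mOf (g : ℚ → ℝ) B := by
  have hgen : (inferInstance : MeasurableSpace ℝ) = .generateFrom (range Iic) :=
    (BorelSpace.measurable_eq).trans (borel_eq_generateFrom_Iic ℝ)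
  refine MeasurableSpace.induction_on_inter
    (C := fun B _ => Measurable fun g : ↥T => mOf (g : ℚ → ℝ) B) hgen isPiSystem_Iic
    ?_ ?_ ?_ ?_ _ hB
  · simp only [measure_empty]; exact measurable_const
  · rintro t ⟨x, rfl⟩
    have heq : ∀ g : ↥T, mOf (g : ℚ → ℝ) (Iic x)
        = ⨅ p : {q : ℚ // x < (q : ℝ)}, ENNReal.ofReal ((g : ℚ → ℝ) p) := by
      intro g
      rw [mOf_Iic, gfix_eq (hT _ g.2), ratInf, ENNReal.ofReal_iInf]
    simp_rw [heq]
    exact Measurable.iInf fun p => ENNReal.measurable_ofReal.comp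
      ((measurable_pi_apply (p : ℚ)).comp measurable_subtype_coe)
  · rintro t htm iht
    have heq : ∀ g : ↥T, mOf (g : ℚ → ℝ) tᶜ = 1 - mOf (g : ℚ → ℝ) t := by
      intro g
      rw [measure_compl htm (measure_ne_top _ _), measure_univ]
    simp_rw [heq]
    exact measurable_const.sub iht
  · rintro s hdisj hsm ihs
    have heq : ∀ g : ↥T, mOf (g : ℚ → ℝ) (⋃ n, s n) = ∑' n, mOf (g : ℚ → ℝ) (s n) :=
      fun g => measure_iUnion hdisj hsm
    simp_rw [heq]
    exact Measurable.ennreal_tsum ihs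

lemma measurableSet_pred : MeasurableSet {g : ℚ → ℝ | Pred g} := by
  have h1 : MeasurableSet {g : ℚ → ℝ | Monotone g} := by
    have : {g : ℚ → ℝ | Monotone g} = ⋂ (p : ℚ) (q : ℚ), {g : ℚ → ℝ | p ≤ q → g p ≤ g q} := by
      ext g; simp [Monotone]
    rw [this]
    refine MeasurableSet.iInter fun p => MeasurableSet.iInter fun q => ?_
    by_cases h : p ≤ q
    · simp only [h, true_implies]
      exact measurableSet_le (measurable_pi_apply p) (measurable_pi_apply q)
    · simp only [h, false_implies, setOf_true]
      exact MeasurableSet.univ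
  have h2 : MeasurableSet {g : ℚ → ℝ | ∀ q, 0 ≤ g q} := by
    rw [setOf_forall]
    exact MeasurableSet.iInter fun q => measurableSet_le measurable_const (measurable_pi_apply q)
  have h3 : MeasurableSet {g : ℚ → ℝ | ∀ q, g q ≤ 1} := by
    rw [setOf_forall]
    exact MeasurableSet.iInter fun q => measurableSet_le (measurable_pi_apply q) measurable_const
  have h4 : MeasurableSet {g : ℚ → ℝ | ∀ n : ℕ, ∃ q, g q < ((n : ℝ) + 1)⁻¹} := by
    rw [setOf_forall]
    refine MeasurableSet.iInter fun n => ?_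
    rw [setOf_exists]
    exact MeasurableSet.iUnion fun q => measurableSet_lt (measurable_pi_apply q) measurable_const
  have h5 : MeasurableSet {g : ℚ → ℝ | ∀ n : ℕ, ∃ q, 1 - ((n : ℝ) + 1)⁻¹ < g q} := by
    rw [setOf_forall]
    refine MeasurableSet.iInter fun n => ?_
    rw [setOf_exists]
    exact MeasurableSet.iUnion fun q => measurableSet_lt measurable_const (measurable_pi_apply q)
  have h6 : MeasurableSet {g : ℚ → ℝ |
      ∀ (q : ℚ) (n : ℕ), ∃ p, q < p ∧ g p < g q + ((n : ℝ) + 1)⁻¹} := by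
    rw [setOf_forall]
    refine MeasurableSet.iInter fun q => ?_
    rw [setOf_forall]
    refine MeasurableSet.iInter fun n => ?_
    rw [setOf_exists]
    refine MeasurableSet.iUnion fun p => ?_
    by_cases h : q < p
    · simp only [h, true_and]
      exact measurableSet_lt (measurable_pi_apply p)
        ((measurable_pi_apply q).add_const _)
    · have : {g : ℚ → ℝ | q < p ∧ g p < g q + ((n : ℝ) + 1)⁻¹} = ∅ := by
        ext g; simp [h]
      rw [this]
      exact MeasurableSet.empty
  have : {g : ℚ → ℝ | Pred g} = {g | Monotone g} ∩ ({g | ∀ q, 0 ≤ g q} ∩ ({g | ∀ q, g q ≤ 1} ∩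
      ({g : ℚ → ℝ | ∀ n : ℕ, ∃ q, g q < ((n : ℝ) + 1)⁻¹} ∩
      ({g : ℚ → ℝ | ∀ n : ℕ, ∃ q, 1 - ((n : ℝ) + 1)⁻¹ < g q} ∩
      {g : ℚ → ℝ | ∀ (q : ℚ) (n : ℕ), ∃ p, q < p ∧ g p < g q + ((n : ℝ) + 1)⁻¹})))) := by
    ext g
    simp only [Pred, mem_setOf_eq, mem_inter_iff]
  rw [this]
  exact h1.inter (h2.inter (h3.inter (h4.inter (h5.inter h6))))


lemma countablySeparated_of_standardBorel (α : Type*) [MeasurableSpace α]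
    [StandardBorelSpace α] : MeasurableSpace.CountablySeparated α := by
  letI := upgradeStandardBorel α
  infer_instance

end Stmt8Aux

end Stmt8AuxSection

open Stmt8Aux in
/-- For a Polish space `V` and a countable generating algebra `Q`, the set
`M(Q)` of σ-additive probability charges is a measurable subset of the set `C(Q)` of all
probability charges, with respect to the trace of the product σ-algebra of `[0,1]^Q`. -/
theorem stmt8 {V : Type*} [TopologicalSpace V] [PolishSpace V]
    [MeasurableSpace V] [BorelSpace V]
    (Q : Set (Set V)) (hQc : Q.Countable) (hQ : IsSetAlgebra Q)
    (hgen : MeasurableSpace.generateFrom Q = ‹MeasurableSpace V›) :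
    MeasurableSet {μ : {f : ↥Q → ℝ // IsChargeOn Q f} | IsSigmaAddOn Q (μ : ↥Q → ℝ)} := by
  classical
  haveI := hQc.to_subtype
  haveI : MeasurableSpace.CountablySeparated {f : ↥Q → ℝ // IsChargeOn Q f} := by
    haveI := countablySeparated_of_standardBorel (↥Q → ℝ)
    exact inferInstanceAs (MeasurableSpace.CountablySeparated ↥{f : ↥Q → ℝ | IsChargeOn Q f})
  set e : V → ℝ := MeasureTheory.embeddingReal V with he_def
  have he : MeasurableEmbedding e := MeasureTheory.measurableEmbedding_embeddingReal V
  have himage_meas : ∀ s : Set V, MeasurableSet s → MeasurableSet (e '' s) :=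
    fun s hs => he.measurableSet_image.2 hs
  set T : Set (ℚ → ℝ) := {g | Pred g ∧ mOf g (Set.range e) = 1} with hT
  have hTsub : ∀ g ∈ T, Pred g := fun g hg => hg.1
  have hTmeas : MeasurableSet T := by
    have h1 : MeasurableSet {g : ℚ → ℝ | Pred g} := measurableSet_pred
    have h2 : MeasurableSet {x : ↥{g : ℚ → ℝ | Pred g} | mOf ↑x (Set.range e) = 1} :=
      (measurable_mOf (T := {g : ℚ → ℝ | Pred g}) (fun g hg => hg) he.measurableSet_range)
        (measurableSet_singleton 1)
    have himage := (MeasurableEmbedding.subtype_coe h1).measurableSet_image.2 h2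
    have hTeq : T = Subtype.val '' {x : ↥{g : ℚ → ℝ | Pred g} | mOf ↑x (Set.range e) = 1} := by
      ext g
      constructor
      · rintro ⟨hg1, hg2⟩; exact ⟨⟨g, hg1⟩, hg2, rfl⟩
      · rintro ⟨x, hx, rfl⟩; exact ⟨x.2, hx⟩
    rw [hTeq]; exact himage
  have hQmeas : ∀ A : ↥Q, MeasurableSet (A : Set V) := fun A => measQ hgen A.2
  have hcomap : ∀ g : ↥T, (Measure.comap e (mOf ↑g)) Set.univ = 1 := by
    intro g
    rw [Measure.comap_apply e he.injective himage_meas _ MeasurableSet.univ, Set.image_univ]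
    exact g.2.2
  have hprob : ∀ g : ↥T, IsProbabilityMeasure (Measure.comap e (mOf ↑g)) :=
    fun g => ⟨hcomap g⟩
  set χ : ↥T → {f : ↥Q → ℝ // IsChargeOn Q f} := fun g =>
    ⟨chargeOf Q (Measure.comap e (mOf ↑g)),
      haveI := hprob g
      chargeOf_isCharge hgen _⟩ with hχ
  have hχmeas : Measurable χ := by
    refine Measurable.subtype_mk ?_
    rw [measurable_pi_iff]
    intro A
    have heq : ∀ g : ↥T, chargeOf Q (Measure.comap e (mOf ↑g)) A
        = (mOf (↑g : ℚ → ℝ) (e '' A)).toReal := by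
      intro g
      simp only [chargeOf]
      rw [Measure.comap_apply e he.injective himage_meas _ (hQmeas A)]
    simp_rw [heq]
    exact (measurable_mOf hTsub (himage_meas _ (hQmeas A))).ennreal_toReal
  have hres : ∀ g : ↥T, (mOf (↑g : ℚ → ℝ)).restrict (Set.range e) = mOf ↑g := by
    intro g
    refine Measure.restrict_eq_self_of_ae_mem ?_
    have h0 : mOf (↑g : ℚ → ℝ) (Set.range e)ᶜ = 0 := by
      rw [measure_compl he.measurableSet_range (measure_ne_top _ _), measure_univ, g.2.2,
        tsub_self]
    exact ae_iff.2 h0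
  have hχinj : Function.Injective χ := by
    intro g₁ g₂ hgg
    have hch : chargeOf Q (Measure.comap e (mOf ↑g₁))
        = chargeOf Q (Measure.comap e (mOf ↑g₂)) := congrArg Subtype.val hgg
    haveI := hprob g₁; haveI := hprob g₂
    have hmeq : Measure.comap e (mOf ↑g₁) = Measure.comap e (mOf ↑g₂) := by
      refine ext_of_generate_finite Q hgen.symm
        (fun s hs t ht _ => hQ.inter_mem hs ht) ?_ (by rw [hcomap g₁, hcomap g₂])
      intro s hs
      have hfs := congrFun hch ⟨s, hs⟩
      simp only [chargeOf] at hfs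
      exact (ENNReal.toReal_eq_toReal_iff' (measure_ne_top _ _) (measure_ne_top _ _)).1 hfs
    have hmm : mOf (↑g₁ : ℚ → ℝ) = mOf ↑g₂ := by
      have h1 := congrArg (Measure.map e) hmeq
      rwa [he.map_comap, he.map_comap, hres g₁, hres g₂] at h1
    apply Subtype.ext
    funext q
    have e1 := mOf_Iic_rat (hTsub _ g₁.2) q
    rw [hmm, mOf_Iic_rat (hTsub _ g₂.2) q] at e1
    exact ((ENNReal.ofReal_eq_ofReal_iff ((hTsub _ g₂.2).2.1 q)
      ((hTsub _ g₁.2).2.1 q)).1 e1).symm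
  have hrange : {μ : {f : ↥Q → ℝ // IsChargeOn Q f} | IsSigmaAddOn Q (μ : ↥Q → ℝ)}
      = Set.range χ := by
    ext μ
    constructor
    · intro hsig
      obtain ⟨m, hm_prob, hm⟩ := exists_measure hQ hgen μ.2 hsig
      haveI := hm_prob
      set ν := Measure.map e m with hν
      haveI : IsProbabilityMeasure ν := Measure.isProbabilityMeasure_map he.measurable.aemeasurable
      set g : ℚ → ℝ := fun q => ProbabilityTheory.cdf ν (q : ℝ) with hg
      have hPred : Pred g := pred_cdf ν
      have hmOf : mOf g = ν := mOf_cdf ν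
      have hgT : g ∈ T := by
        refine ⟨hPred, ?_⟩
        rw [hmOf, hν, Measure.map_apply he.measurable he.measurableSet_range,
          Set.preimage_range, measure_univ]
      refine ⟨⟨g, hgT⟩, ?_⟩
      apply Subtype.ext
      show chargeOf Q (Measure.comap e (mOf g)) = (μ : ↥Q → ℝ)
      rw [hmOf, hν, he.comap_map]
      funext A
      simp only [chargeOf]
      rw [hm A, ENNReal.toReal_ofReal (μ.2.2.2.1 A)]
    · rintro ⟨g, rfl⟩
      haveI := hprob g
      exact chargeOf_sigmaAdd hgen _
  rw [hrange]
  haveI : StandardBorelSpace ↥T := hTmeas.standardBorel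
  exact (hχmeas.measurableEmbedding hχinj).measurableSet_range
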